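/- arXiv:1201.6092 — 2 statements merged into one kernel-verified Lean document; each statement's English description precedes it below -/
import Mathlib

section
/- For a Jordan block J of size s with eigenvalue θ on the diagonal where |θ| > 1, J is invertible and for all integers k < 0 the operator norm satisfies ‖J^k‖ ≤ s·|k|^{s-1}·|θ|^{k+s}. -/
lemma aux_choose_le_pow (b a : ℕ) : (a + b).choose b ≤ (a + 1) ^ b := by
  induction b with
  | zero => simp
  | succ b ih =>
    have h2 : (a + b + 1) * (a + b).choose b ≤ ((a + 1) * (b + 1)) * (a + 1) ^ b := by
      apply Nat.mul_le_mul _ ih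
      nlinarith
    rw [Nat.add_one_mul_choose_eq (a + b) b] at h2
    have h3 : (a + (b + 1)).choose (b + 1) * (b + 1) ≤ (a + 1) ^ (b + 1) * (b + 1) := by
      have e1 : (a + (b + 1)).choose (b + 1) * (b + 1) = (a + b + 1).choose (b + 1) * (b + 1) := rfl
      have e2 : ((a + 1) * (b + 1)) * (a + 1) ^ b = (a + 1) ^ (b + 1) * (b + 1) := by ring
      omega
    exact Nat.le_of_mul_le_mul_right h3 (Nat.succ_pos b)

lemma aux_shift_pow (s : ℕ) (p : ℕ) :
    (Matrix.of fun i j : Fin s => if (j : ℕ) = (i : ℕ) + 1 then (1 : ℂ) else 0) ^ p =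
      Matrix.of fun i j : Fin s => if (j : ℕ) = (i : ℕ) + p then (1 : ℂ) else 0 := by
  induction p with
  | zero =>
    ext i j
    simp [Matrix.one_apply, Fin.ext_iff, eq_comm]

  | succ p ih =>
    rw [pow_succ, ih]
    ext i j
    simp only [Matrix.mul_apply, Matrix.of_apply]
    rcases Nat.lt_or_ge ((i : ℕ) + p) s with h | h
    · rw [Finset.sum_eq_single (⟨(i : ℕ) + p, h⟩ : Fin s)]
      · simp only [ite_mul, one_mul, zero_mul, if_pos rfl, Nat.add_assoc, if_true]
      · intro b _ hb
        rw [if_neg, zero_mul]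
        intro hb'
        exact hb (Fin.ext hb')
      · simp
    · rw [Finset.sum_eq_zero, if_neg]
      · intro hj
        omega
      · intro l _
        rw [if_neg, zero_mul]
        intro hl
        omega

lemma aux_shift_nilpotent (s : ℕ) :
    (Matrix.of fun i j : Fin s => if (j : ℕ) = (i : ℕ) + 1 then (1 : ℂ) else 0) ^ s = 0 := by
  rw [aux_shift_pow]
  ext i j
  simp only [Matrix.of_apply, Matrix.zero_apply, ite_eq_right_iff]
  intro h
  exact absurd h (by omega)

/-- coefficient of `x^j` in `(1+x)^{-m}` -/
noncomputable def jbc (m j : ℕ) : ℂ := (-1) ^ j * ((m + j - 1).choose j : ℂ)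

lemma jbc_zero_right (m : ℕ) : jbc m 0 = 1 := by
  unfold jbc; simp

lemma jbc_succ_add (m j : ℕ) : jbc (m + 1) (j + 1) + jbc (m + 1) j = jbc m (j + 1) := by
  unfold jbc
  have e1 : m + 1 + (j + 1) - 1 = m + j + 1 := by omega
  have e2 : m + 1 + j - 1 = m + j := by omega
  have e3 : m + (j + 1) - 1 = m + j := by omega
  rw [e1, e2, e3]
  have e4 : (m + j + 1).choose (j + 1) = (m + j).choose j + (m + j).choose (j + 1) :=
    Nat.choose_succ_succ (m + j) j
  rw [e4]
  push_cast
  ring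

lemma aux_B_zero {R : Type*} [Ring R] [Algebra ℂ R] (s : ℕ) (hs : 1 ≤ s) (x : R) :
    ∑ j ∈ Finset.range s, jbc 0 j • x ^ j = 1 := by
  rw [Finset.sum_eq_single_of_mem 0 (Finset.mem_range.2 hs)]
  · rw [jbc_zero_right, pow_zero, one_smul]
  · intro j _ hj
    obtain ⟨j', rfl⟩ : ∃ j', j = j' + 1 := ⟨j - 1, by omega⟩
    have : jbc 0 (j' + 1) = 0 := by
      unfold jbc
      have : (0 + (j' + 1) - 1).choose (j' + 1) = 0 :=
        Nat.choose_eq_zero_of_lt (by omega)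
      rw [this]
      simp
    rw [this, zero_smul]

lemma aux_B_step {R : Type*} [Ring R] [Algebra ℂ R] (s : ℕ) (hs : 1 ≤ s) (x : R)
    (hx : x ^ s = 0) (m : ℕ) :
    (1 + x) * (∑ j ∈ Finset.range s, jbc (m + 1) j • x ^ j) =
      ∑ j ∈ Finset.range s, jbc m j • x ^ j := by
  obtain ⟨t, rfl⟩ : ∃ t, s = t + 1 := ⟨s - 1, by omega⟩
  rw [add_mul, one_mul, Finset.mul_sum]
  have hxmul : ∀ j, x * (jbc (m + 1) j • x ^ j) = jbc (m + 1) j • x ^ (j + 1) := fun j => by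
    rw [mul_smul_comm, ← pow_succ']
  simp_rw [hxmul]
  rw [Finset.sum_range_succ' (fun j => jbc (m + 1) j • x ^ j) t,
      Finset.sum_range_succ (fun j => jbc (m + 1) j • x ^ (j + 1)) t,
      Finset.sum_range_succ' (fun j => jbc m j • x ^ j) t,
      hx, smul_zero, add_zero, jbc_zero_right, pow_zero]
  have key : ∀ j ∈ Finset.range t,
      jbc (m + 1) (j + 1) • x ^ (j + 1) + jbc (m + 1) j • x ^ (j + 1) =
        jbc m (j + 1) • x ^ (j + 1) := fun j _ => by
    rw [← add_smul, jbc_succ_add]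
  calc (∑ j ∈ Finset.range t, jbc (m + 1) (j + 1) • x ^ (j + 1) + (1 : ℂ) • (1 : R)) +
        ∑ j ∈ Finset.range t, jbc (m + 1) j • x ^ (j + 1)
      = (∑ j ∈ Finset.range t, jbc (m + 1) (j + 1) • x ^ (j + 1) +
         ∑ j ∈ Finset.range t, jbc (m + 1) j • x ^ (j + 1)) + (1 : ℂ) • (1 : R) := by abel
    _ = (∑ j ∈ Finset.range t, (jbc (m + 1) (j + 1) • x ^ (j + 1) +
          jbc (m + 1) j • x ^ (j + 1))) + (1 : ℂ) • (1 : R) := by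
        rw [Finset.sum_add_distrib]
    _ = ∑ j ∈ Finset.range t, jbc m (j + 1) • x ^ (j + 1) + (1 : ℂ) • (1 : R) := by
        rw [Finset.sum_congr rfl key]
    _ = ∑ j ∈ Finset.range t, jbc m (j + 1) • x ^ (j + 1) + jbc m 0 • x ^ 0 := by
        rw [jbc_zero_right, pow_zero]
    _ = ∑ j ∈ Finset.range t, jbc m (j + 1) • x ^ (j + 1) + jbc m 0 • 1 := by
        rw [pow_zero]

lemma aux_B_inv {R : Type*} [Ring R] [Algebra ℂ R] (s : ℕ) (hs : 1 ≤ s) (x : R)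
    (hx : x ^ s = 0) : ∀ m : ℕ,
    (1 + x) ^ m * (∑ j ∈ Finset.range s, jbc m j • x ^ j) = 1 := by
  intro m
  induction m with
  | zero => rw [pow_zero, one_mul, aux_B_zero s hs x]
  | succ m ih =>
    rw [pow_succ, mul_assoc, aux_B_step s hs x hx m, ih]

lemma aux_shift_norm_le (s : ℕ) :
    ‖Matrix.toEuclideanCLM (𝕜 := ℂ)
      (Matrix.of fun i j : Fin s => if (j : ℕ) = (i : ℕ) + 1 then (1 : ℂ) else 0)‖ ≤ 1 := by
  set N : Matrix (Fin s) (Fin s) ℂ :=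
    Matrix.of fun i j : Fin s => if (j : ℕ) = (i : ℕ) + 1 then (1 : ℂ) else 0 with hN
  apply ContinuousLinearMap.opNorm_le_bound _ zero_le_one
  intro x
  rw [one_mul]
  have hTx : ∀ i : Fin s, (Matrix.toEuclideanCLM (𝕜 := ℂ) N x) i =
      N.mulVec (fun j => x j) i := by
    intro i
    have := Matrix.ofLp_toEuclideanCLM (𝕜 := ℂ) N x
    have h2 := congrFun this i
    simpa [Matrix.toLin'_apply] using h2
  have hmv : ∀ i : Fin s, N.mulVec (fun j => x j) i =
      if h : (i : ℕ) + 1 < s then x ⟨(i : ℕ) + 1, h⟩ else 0 := by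
    intro i
    simp only [hN, Matrix.mulVec, dotProduct, Matrix.of_apply, ite_mul, one_mul, zero_mul]
    split_ifs with h
    · rw [Finset.sum_eq_single (⟨(i : ℕ) + 1, h⟩ : Fin s)]
      · simp
      · intro b _ hb
        rw [if_neg]
        intro hb'
        exact hb (Fin.ext hb')
      · simp
    · apply Finset.sum_eq_zero
      intro j _
      rw [if_neg]
      intro hj
      exact h (hj ▸ j.isLt)
  set G : ℕ → ℝ := fun t => if h : t < s then ‖x ⟨t, h⟩‖ ^ 2 else 0 with hG
  have hGnn : ∀ t, 0 ≤ G t := by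
    intro t
    simp only [hG]
    split_ifs
    · positivity
    · exact le_refl 0
  rw [EuclideanSpace.norm_eq, EuclideanSpace.norm_eq]
  apply Real.sqrt_le_sqrt
  have h1 : ∀ i : Fin s, ‖(Matrix.toEuclideanCLM (𝕜 := ℂ) N x) i‖ ^ 2 = G ((i : ℕ) + 1) := by
    intro i
    rw [hTx, hmv]
    simp only [hG]
    split_ifs with h
    · rfl
    · simp
  calc ∑ i : Fin s, ‖(Matrix.toEuclideanCLM (𝕜 := ℂ) N x) i‖ ^ 2
      = ∑ i : Fin s, G ((i : ℕ) + 1) := by rw [Finset.sum_congr rfl (fun i _ => h1 i)]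
    _ = ∑ t ∈ Finset.range s, G (t + 1) := Fin.sum_univ_eq_sum_range (fun t => G (t + 1)) s
    _ ≤ ∑ t ∈ Finset.range s, G t := by
        have e1 : ∑ t ∈ Finset.range (s + 1), G t =
            ∑ t ∈ Finset.range s, G (t + 1) + G 0 := Finset.sum_range_succ' G s
        have e2 : ∑ t ∈ Finset.range (s + 1), G t =
            ∑ t ∈ Finset.range s, G t + G s := Finset.sum_range_succ G s
        have e3 : G s = 0 := by simp [hG]
        have := hGnn 0
        linarith
    _ = ∑ i : Fin s, G (i : ℕ) := (Fin.sum_univ_eq_sum_range G s).symm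
    _ = ∑ i : Fin s, ‖x i‖ ^ 2 := by
        apply Finset.sum_congr rfl
        intro i _
        simp only [hG]
        rw [dif_pos i.isLt]


set_option synthInstance.maxHeartbeats 1000000 in
lemma clm_smul_norm {n : Type*} [Fintype n] [DecidableEq n] (c : ℂ) (A : Matrix n n ℂ) :
    ‖Matrix.toEuclideanCLM (𝕜 := ℂ) (c • A)‖ = ‖c‖ * ‖Matrix.toEuclideanCLM (𝕜 := ℂ) A‖ := by
  rw [map_smul]
  exact norm_smul c (Matrix.toEuclideanCLM (𝕜 := ℂ) A)

set_option maxHeartbeats 2000000 in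
set_option synthInstance.maxHeartbeats 1000000 in
/-- For a Jordan block `J` of size `s` with eigenvalue `θ`, `|θ| > 1`, `J` is invertible, and
for `k < 0` the operator norm satisfies `‖J^k‖ ≤ s·|k|^{s-1}·|θ|^{k+s}`. -/
theorem jordan_block_neg_pow_norm_bound (s : ℕ) (hs : 1 ≤ s) (θ : ℂ)
    (hθ : 1 < ‖θ‖) (J : Matrix (Fin s) (Fin s) ℂ)
    (hJ : ∀ i j : Fin s, J i j =
      if j = i then θ else if (j : ℕ) = (i : ℕ) + 1 then 1 else 0)
    (k : ℤ) (hk : k < 0) :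
    IsUnit J ∧
      ‖Matrix.toEuclideanCLM (𝕜 := ℂ) (J⁻¹ ^ (-k).toNat)‖ ≤
        (s : ℝ) * |(k : ℝ)| ^ (s - 1) * ‖θ‖ ^ (k + s) := by
  have hθ0 : θ ≠ 0 := by
    intro h
    rw [h] at hθ
    simp at hθ
    linarith
  set m : ℕ := (-k).toNat with hm
  have hm1 : 1 ≤ m := by omega
  set N : Matrix (Fin s) (Fin s) ℂ :=
    Matrix.of fun i j : Fin s => if (j : ℕ) = (i : ℕ) + 1 then (1 : ℂ) else 0 with hNdef
  have hJN : J = θ • (1 : Matrix (Fin s) (Fin s) ℂ) + N := by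
    ext i j
    rw [hJ]
    simp only [Matrix.add_apply, Matrix.smul_apply, Matrix.one_apply, Matrix.of_apply, hNdef,
      smul_eq_mul, mul_ite, mul_one, mul_zero]
    by_cases h : j = i
    · subst h
      rw [if_pos rfl, if_pos rfl, if_neg (by omega : ¬(j : ℕ) = (j : ℕ) + 1), add_zero]
    · have h' : ¬ i = j := fun e => h e.symm
      rw [if_neg h, if_neg h', zero_add]
  set x : Matrix (Fin s) (Fin s) ℂ := θ⁻¹ • N with hxdef
  have hxs : x ^ s = 0 := by
    rw [hxdef, smul_pow, aux_shift_nilpotent s, smul_zero]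
  have hJx : J = θ • (1 + x) := by
    rw [smul_add, hxdef, smul_smul, mul_inv_cancel₀ hθ0, one_smul, hJN]
  set B : ℕ → Matrix (Fin s) (Fin s) ℂ :=
    fun m => ∑ j ∈ Finset.range s, jbc m j • x ^ j with hBdef
  have hB : ∀ m : ℕ, (1 + x) ^ m * B m = 1 := aux_B_inv s hs x hxs
  have hJmB : ∀ m : ℕ, J ^ m * ((θ⁻¹) ^ m • B m) = 1 := by
    intro m
    rw [hJx, smul_pow, smul_mul_smul_comm, ← mul_pow, mul_inv_cancel₀ hθ0, one_pow, one_smul,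
      hB]
  have hU : IsUnit J := by
    apply (Matrix.isUnit_iff_isUnit_det J).mpr
    apply Matrix.isUnit_det_of_right_inverse (B := (θ⁻¹) ^ 1 • B 1)
    have := hJmB 1
    rwa [pow_one] at this
  refine ⟨hU, ?_⟩
  -- identify J⁻¹ ^ m
  have hdet : IsUnit J.det := (Matrix.isUnit_iff_isUnit_det J).mp hU
  have hinv1 : J⁻¹ * J = 1 := Matrix.nonsing_inv_mul J hdet
  have hinv2 : J * J⁻¹ = 1 := Matrix.mul_nonsing_inv J hdet
  have hc : Commute J⁻¹ J := by
    unfold Commute SemiconjBy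
    rw [hinv1, hinv2]
  have hpowinv : J⁻¹ ^ m * J ^ m = 1 := by
    rw [← hc.mul_pow, hinv1, one_pow]
  have hkey : J⁻¹ ^ m = (θ⁻¹) ^ m • B m := left_inv_eq_right_inv hpowinv (hJmB m)
  rw [hkey]
  -- expand as a single sum over powers of N
  have hexp : (θ⁻¹) ^ m • B m =
      ∑ j ∈ Finset.range s, ((θ⁻¹) ^ m * jbc m j * (θ⁻¹) ^ j) • N ^ j := by
    rw [hBdef, Finset.smul_sum]
    apply Finset.sum_congr rfl
    intro j _
    rw [hxdef, smul_pow, smul_smul, smul_smul, mul_assoc]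
  rw [hexp, map_sum]
  set T := Matrix.toEuclideanCLM (𝕜 := ℂ) N with hT
  have hTnorm : ‖T‖ ≤ 1 := aux_shift_norm_le s
  have hTj : ∀ j : ℕ, ‖T ^ j‖ ≤ 1 := by
    intro j
    induction j with
    | zero =>
      rw [pow_zero]
      exact ContinuousLinearMap.norm_id_le
    | succ j ih =>
      rw [pow_succ]
      calc ‖T ^ j * T‖ ≤ ‖T ^ j‖ * ‖T‖ := norm_mul_le _ _
        _ ≤ 1 * 1 := mul_le_mul ih hTnorm (norm_nonneg _) zero_le_one
        _ = 1 := mul_one 1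
  have hterm : ∀ j ∈ Finset.range s,
      ‖Matrix.toEuclideanCLM (𝕜 := ℂ) (((θ⁻¹) ^ m * jbc m j * (θ⁻¹) ^ j) • N ^ j)‖ ≤
        (m : ℝ) ^ (s - 1) * (‖θ‖)⁻¹ ^ m := by
    intro j hj
    rw [clm_smul_norm, map_pow]
    have habs : ‖(θ⁻¹) ^ m * jbc m j * (θ⁻¹) ^ j‖ =
        (‖θ‖)⁻¹ ^ m * ((m + j - 1).choose j : ℝ) * (‖θ‖)⁻¹ ^ j := by
      rw [norm_mul, norm_mul, norm_pow, norm_pow]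
      unfold jbc
      rw [norm_mul, norm_pow]
      simp [map_inv₀]
    rw [habs]
    have hchoose : ((m + j - 1).choose j : ℝ) ≤ (m : ℝ) ^ (s - 1) := by
      have h1 : (m + j - 1).choose j ≤ m ^ j := by
        have := aux_choose_le_pow j (m - 1)
        have e : m - 1 + j = m + j - 1 := by omega
        have e2 : m - 1 + 1 = m := by omega
        rwa [e, e2] at this
      have h2 : m ^ j ≤ m ^ (s - 1) := Nat.pow_le_pow_right hm1 (by
        have := Finset.mem_range.mp hj
        omega)
      exact_mod_cast h1.trans h2
    have hinvle : (‖θ‖)⁻¹ ^ j ≤ 1 := by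
      apply pow_le_one₀ (by positivity)
      rw [inv_le_one_iff₀]
      right
      linarith
    have hnn : (0 : ℝ) ≤ (‖θ‖)⁻¹ ^ m := by positivity
    calc (‖θ‖)⁻¹ ^ m * ((m + j - 1).choose j : ℝ) * (‖θ‖)⁻¹ ^ j *
          ‖T ^ j‖
        ≤ (‖θ‖)⁻¹ ^ m * (m : ℝ) ^ (s - 1) * 1 * 1 := by
          apply mul_le_mul _ (hTj j) (norm_nonneg _) (by positivity)
          apply mul_le_mul _ hinvle (by positivity) (by positivity)
          apply mul_le_mul_of_nonneg_left hchoose hnn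
      _ = (m : ℝ) ^ (s - 1) * (‖θ‖)⁻¹ ^ m := by ring
  calc ‖∑ j ∈ Finset.range s,
        Matrix.toEuclideanCLM (𝕜 := ℂ) (((θ⁻¹) ^ m * jbc m j * (θ⁻¹) ^ j) • N ^ j)‖
      ≤ ∑ j ∈ Finset.range s, ‖Matrix.toEuclideanCLM (𝕜 := ℂ)
          (((θ⁻¹) ^ m * jbc m j * (θ⁻¹) ^ j) • N ^ j)‖ := norm_sum_le _ _
    _ ≤ ∑ _j ∈ Finset.range s, (m : ℝ) ^ (s - 1) * (‖θ‖)⁻¹ ^ m :=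
        Finset.sum_le_sum hterm
    _ = (s : ℝ) * ((m : ℝ) ^ (s - 1) * (‖θ‖)⁻¹ ^ m) := by
        rw [Finset.sum_const, Finset.card_range, nsmul_eq_mul]
    _ ≤ (s : ℝ) * |(k : ℝ)| ^ (s - 1) * ‖θ‖ ^ (k + s) := by
        have hmk : (m : ℝ) = |(k : ℝ)| := by
          have h1 : ((-k).toNat : ℤ) = -k := Int.toNat_of_nonneg (by omega)
          have h2 : ((m : ℤ) : ℝ) = ((-k : ℤ) : ℝ) := by rw [hm, h1]
          push_cast at h2
          rw [h2, abs_of_neg (show (k : ℝ) < 0 by exact_mod_cast hk)]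
        have hks : k + (s : ℤ) = (s : ℤ) - (m : ℤ) := by omega
        have hpos : (0 : ℝ) < ‖θ‖ := by linarith
        have hzpow : ‖θ‖ ^ (k + (s : ℤ)) =
            ‖θ‖ ^ (s : ℤ) * (‖θ‖)⁻¹ ^ m := by
          rw [hks, sub_eq_add_neg, zpow_add₀ hpos.ne', zpow_neg, zpow_natCast, zpow_natCast,
            inv_pow]
        have hone : (1 : ℝ) ≤ ‖θ‖ ^ (s : ℤ) := by
          rw [zpow_natCast]
          exact one_le_pow₀ hθ.le
        rw [hmk, hzpow, mul_assoc]
        apply mul_le_mul_of_nonneg_left _ (by positivity)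
        have h1 : |(k : ℝ)| ^ (s - 1) * (‖θ‖)⁻¹ ^ m ≤
            |(k : ℝ)| ^ (s - 1) * (‖θ‖ ^ (s : ℤ) * (‖θ‖)⁻¹ ^ m) := by
          apply mul_le_mul_of_nonneg_left _ (by positivity)
          nth_rewrite 1 [← one_mul ((‖θ‖)⁻¹ ^ m)]
          apply mul_le_mul_of_nonneg_right hone (by positivity)
        exact h1
end

section
/- Let F ⊂ ℝ^d be a finite union of closed unit lattice cubes (cubes of the form z + [0,1]^d, z ∈ ℤ^d), and let b₁ > 0. Then for all t ∈ (0, b₁], the Lebesgue measure of the t-neighborhood of ∂F satisfies ℒ^d(U(∂F, t)) ≤ 2·(1 + 2b₁)^{d−1}·t·ℋ^{d−1}(∂F). -/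
open MeasureTheory Metric Set
open scoped NNReal ENNReal

namespace VTBAux

variable {d : ℕ}

/-- The closed unit lattice cube with lower corner `z`. -/
def cube (z : Fin d → ℤ) : Set (EuclideanSpace ℝ (Fin d)) :=
  {x | ∀ j, x j ∈ Set.Icc ((z j : ℝ)) ((z j : ℝ) + 1)}

/-- The closed lower face of the cube `p.1` orthogonal to direction `p.2`. -/
def face (p : (Fin d → ℤ) × Fin d) : Set (EuclideanSpace ℝ (Fin d)) :=
  {x | x p.2 = (p.1 p.2 : ℝ) ∧ ∀ j, x j ∈ Set.Icc ((p.1 j : ℝ)) ((p.1 j : ℝ) + 1)}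

/-- The relatively open version of `face`. -/
def oface (p : (Fin d → ℤ) × Fin d) : Set (EuclideanSpace ℝ (Fin d)) :=
  {x | x p.2 = (p.1 p.2 : ℝ) ∧ ∀ j, j ≠ p.2 → x j ∈ Set.Ioo ((p.1 j : ℝ)) ((p.1 j : ℝ) + 1)}

/-- `face p` is a boundary face: exactly one of the two adjacent cubes belongs to `Z`. -/
def IsBdry (Z : Finset (Fin d → ℤ)) (p : (Fin d → ℤ) × Fin d) : Prop :=
  (p.1 ∈ Z ∧ p.1 - Pi.single p.2 1 ∉ Z) ∨ (p.1 ∉ Z ∧ p.1 - Pi.single p.2 1 ∈ Z)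

/-- The finite set of boundary faces. -/
noncomputable def bdry (Z : Finset (Fin d → ℤ)) : Finset ((Fin d → ℤ) × Fin d) :=
  letI := Classical.decPred (IsBdry Z)
  ((Z ∪ (Z ×ˢ Finset.univ).image fun q => q.1 + Pi.single q.2 1) ×ˢ Finset.univ).filter
    (IsBdry Z)

lemma mem_bdry {Z : Finset (Fin d → ℤ)} {p : (Fin d → ℤ) × Fin d} :
    p ∈ bdry Z ↔ IsBdry Z p := by
  classical
  unfold bdry
  simp only [Finset.mem_filter, Finset.mem_product, Finset.mem_univ, and_true]
  refine ⟨fun h => h.2, fun h => ⟨?_, h⟩⟩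
  rcases h with ⟨h1, _⟩ | ⟨_, h2⟩
  · exact Finset.mem_union_left _ h1
  · refine Finset.mem_union_right _ (Finset.mem_image.2 ⟨(p.1 - Pi.single p.2 1, p.2), ?_, ?_⟩)
    · exact Finset.mem_product.2 ⟨h2, Finset.mem_univ _⟩
    · simp

lemma apply_measurable (j : Fin d) : Measurable fun x : EuclideanSpace ℝ (Fin d) => x j :=
  (measurable_pi_apply j).comp (MeasurableEquiv.toLp 2 (Fin d → ℝ)).symm.measurable

lemma apply_continuous (j : Fin d) : Continuous fun x : EuclideanSpace ℝ (Fin d) => x j :=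
  (EuclideanSpace.proj j : EuclideanSpace ℝ (Fin d) →L[ℝ] ℝ).continuous

lemma isClosed_cube (z : Fin d → ℤ) : IsClosed (cube z) := by
  have : cube z = ⋂ j, (fun x : EuclideanSpace ℝ (Fin d) => x j) ⁻¹'
      Set.Icc ((z j : ℝ)) ((z j : ℝ) + 1) := by
    ext x; simp [cube]
  rw [this]
  exact isClosed_iInter fun j => IsClosed.preimage (apply_continuous j) isClosed_Icc

lemma isClosed_face (p : (Fin d → ℤ) × Fin d) : IsClosed (face p) := by
  have : face p = ((fun x : EuclideanSpace ℝ (Fin d) => x p.2) ⁻¹' {(p.1 p.2 : ℝ)}) ∩ cube p.1 := by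
    ext x; simp [face, cube]
  rw [this]
  exact ((isClosed_singleton).preimage (apply_continuous p.2)).inter (isClosed_cube p.1)

lemma measurableSet_oface (p : (Fin d → ℤ) × Fin d) : MeasurableSet (oface p) := by
  have : oface p = ((fun x : EuclideanSpace ℝ (Fin d) => x p.2) ⁻¹' {(p.1 p.2 : ℝ)}) ∩
      ⋂ j, ⋂ (_ : j ≠ p.2), (fun x : EuclideanSpace ℝ (Fin d) => x j) ⁻¹'
        Set.Ioo ((p.1 j : ℝ)) ((p.1 j : ℝ) + 1) := by
    ext x; simp [oface]
  rw [this]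
  refine ((measurableSet_singleton _).preimage (apply_measurable p.2)).inter ?_
  exact MeasurableSet.iInter fun j => MeasurableSet.iInter fun _ =>
    measurableSet_Ioo.preimage (apply_measurable j)

lemma coord_dist_le (x y : EuclideanSpace ℝ (Fin d)) (j : Fin d) :
    dist (x j) (y j) ≤ dist x y := by
  rw [EuclideanSpace.dist_eq]
  rw [Real.le_sqrt dist_nonneg (by positivity)]
  exact Finset.single_le_sum (f := fun i => dist (x i) (y i) ^ 2)
    (fun i _ => by positivity) (Finset.mem_univ j)

/-- A point of an open unit cell lies only in the closed cube of that cell. -/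
lemma opencell_unique {c z : Fin d → ℤ} {y : EuclideanSpace ℝ (Fin d)}
    (hy : ∀ j, y j ∈ Set.Ioo ((c j : ℝ)) ((c j : ℝ) + 1)) (hz : y ∈ cube z) : z = c := by
  funext j
  have h1 : (z j : ℝ) ≤ y j := (hz j).1
  have h2 : y j ≤ (z j : ℝ) + 1 := (hz j).2
  have h3 : (c j : ℝ) < y j := (hy j).1
  have h4 : y j < (c j : ℝ) + 1 := (hy j).2
  have e1 : (z j : ℝ) < (c j : ℝ) + 1 := lt_of_le_of_lt h1 h4
  have e2 : (c j : ℝ) < (z j : ℝ) + 1 := lt_of_lt_of_le h3 h2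
  have e1' : z j < c j + 1 := by exact_mod_cast e1
  have e2' : c j < z j + 1 := by exact_mod_cast e2
  omega

/-- If every lattice cell whose closed cube contains `x` belongs to `Z`, then `x` is in the
interior of the union. -/
lemma mem_interior_of_cells (hd : 0 < d) (Z : Finset (Fin d → ℤ))
    {x : EuclideanSpace ℝ (Fin d)} (h : ∀ c, x ∈ cube c → c ∈ Z) :
    x ∈ interior (⋃ z ∈ Z, cube z) := by
  haveI : Nonempty (Fin d) := ⟨⟨0, hd⟩⟩
  set f : Fin d → ℝ := fun j => min (x j - ((⌈x j⌉ : ℝ) - 1)) (((⌊x j⌋ : ℝ) + 1) - x j) with hf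
  have hfpos : ∀ j, 0 < f j := by
    intro j
    refine lt_min (by have := Int.ceil_lt_add_one (x j); linarith) ?_
    have := Int.lt_floor_add_one (x j); linarith
  set ε : ℝ := Finset.univ.inf' Finset.univ_nonempty f with hε
  have hεpos : 0 < ε := by
    rw [hε, Finset.lt_inf'_iff]
    exact fun j _ => hfpos j
  have hball : Metric.ball x ε ⊆ ⋃ z ∈ Z, cube z := by
    intro y hy
    rw [Metric.mem_ball] at hy
    have hyj : ∀ j, dist (y j) (x j) < f j := fun j =>
      lt_of_le_of_lt (coord_dist_le y x j)
        (lt_of_lt_of_le hy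
          (Finset.inf'_le _ (Finset.mem_univ j)))
    set c : Fin d → ℤ := fun j => ⌊y j⌋ with hc
    have hxc : x ∈ cube c := by
      intro j
      have hd1 : |y j - x j| < f j := by rw [← Real.dist_eq]; exact hyj j
      have hlow : ((⌊y j⌋ : ℝ)) ≤ x j := by
        by_contra hcon
        push_neg at hcon
        have h1 : ⌊x j⌋ < ⌊y j⌋ := by
          have : (⌊x j⌋ : ℝ) < (⌊y j⌋ : ℝ) := lt_of_le_of_lt (Int.floor_le (x j)) hcon
          exact_mod_cast this
        have h2 : ((⌊x j⌋ : ℝ)) + 1 ≤ (⌊y j⌋ : ℝ) := by exact_mod_cast h1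
        have h3 : ((⌊x j⌋ : ℝ)) + 1 ≤ y j := le_trans h2 (Int.floor_le (y j))
        have h4 : f j ≤ ((⌊x j⌋ : ℝ)) + 1 - x j := min_le_right _ _
        have := abs_lt.1 hd1
        linarith
      have hhigh : x j ≤ ((⌊y j⌋ : ℝ)) + 1 := by
        by_contra hcon
        push_neg at hcon
        have h1 : ⌊y j⌋ + 1 < ⌈x j⌉ := by
          have : ((⌊y j⌋ : ℝ)) + 1 < (⌈x j⌉ : ℝ) := lt_of_lt_of_le hcon (Int.le_ceil (x j))
          exact_mod_cast this
        have h2 : ((⌊y j⌋ : ℝ)) + 1 ≤ (⌈x j⌉ : ℝ) - 1 := by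
          have h2' : ⌊y j⌋ + 1 ≤ ⌈x j⌉ - 1 := by omega
          exact_mod_cast h2'
        have h3 : y j < ((⌈x j⌉ : ℝ)) - 1 := lt_of_lt_of_le (Int.lt_floor_add_one (y j)) h2
        have h4 : f j ≤ x j - (((⌈x j⌉ : ℝ)) - 1) := min_le_left _ _
        have := abs_lt.1 hd1
        linarith
      exact ⟨hlow, hhigh⟩
    have hcZ : c ∈ Z := h c hxc
    have hyc : y ∈ cube c := fun j =>
      ⟨Int.floor_le (y j), le_of_lt (Int.lt_floor_add_one (y j))⟩
    exact Set.mem_biUnion hcZ hyc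
  exact mem_interior.2 ⟨Metric.ball x ε, hball, Metric.isOpen_ball, Metric.mem_ball_self hεpos⟩

/-- Walking from an in-cell to an out-cell, both adhering to `x`, produces a boundary face
containing `x`. -/
lemma walk (Z : Finset (Fin d → ℤ)) (x : EuclideanSpace ℝ (Fin d)) :
    ∀ n (c c' : Fin d → ℤ), (Finset.univ.filter fun j => c j ≠ c' j).card ≤ n →
      x ∈ cube c → x ∈ cube c' → c ∈ Z → c' ∉ Z →
      ∃ p, IsBdry Z p ∧ x ∈ face p := by
  classical
  intro n
  induction n with
  | zero =>
    intro c c' hcard hc hc' hcZ hc'Z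
    exfalso
    have : c = c' := by
      funext j
      by_contra hj
      have : j ∈ Finset.univ.filter fun j => c j ≠ c' j := by simp [hj]
      have := Finset.card_pos.2 ⟨j, this⟩
      omega
    exact hc'Z (this ▸ hcZ)
  | succ n ih =>
    intro c c' hcard hc hc' hcZ hc'Z
    by_cases hcc : c = c'
    · exact absurd (hcc ▸ hcZ) hc'Z
    obtain ⟨i, hi⟩ : ∃ i, c i ≠ c' i := Function.ne_iff.1 hcc
    set c'' := Function.update c i (c' i) with hc''def
    have hxc'' : x ∈ cube c'' := by
      intro j
      rcases eq_or_ne j i with rfl | hj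
      · simpa [hc''def, Function.update_self] using hc' j
      · simpa [hc''def, Function.update_of_ne hj] using hc j
    by_cases h'' : c'' ∈ Z
    · refine ih c'' c' ?_ hxc'' hc' h'' hc'Z
      have hsub : (Finset.univ.filter fun j => c'' j ≠ c' j) ⊆
          (Finset.univ.filter fun j => c j ≠ c' j).erase i := by
        intro j hj
        simp only [Finset.mem_filter, Finset.mem_univ, true_and] at hj
        have hji : j ≠ i := by
          intro h; apply hj; rw [h, hc''def, Function.update_self]
        refine Finset.mem_erase.2 ⟨hji, ?_⟩
        simp only [Finset.mem_filter, Finset.mem_univ, true_and]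
        rwa [hc''def, Function.update_of_ne hji] at hj
      have hmem : i ∈ Finset.univ.filter fun j => c j ≠ c' j := by simp [hi]
      have := Finset.card_le_card hsub
      rw [Finset.card_erase_of_mem hmem] at this
      omega
    · have hb1 : (c i : ℝ) ≤ x i := (hc i).1
      have hb2 : x i ≤ (c i : ℝ) + 1 := (hc i).2
      have hb3 : (c' i : ℝ) ≤ x i := (hc' i).1
      have hb4 : x i ≤ (c' i : ℝ) + 1 := (hc' i).2
      have e1 : c i ≤ c' i + 1 := by exact_mod_cast le_trans hb1 hb4
      have e2 : c' i ≤ c i + 1 := by exact_mod_cast le_trans hb3 hb2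
      have hdir : c' i = c i + 1 ∨ c' i = c i - 1 := by omega
      rcases hdir with h1 | h1
      · refine ⟨(c'', i), Or.inr ⟨h'', ?_⟩, ?_, fun j => hxc'' j⟩
        · have : c'' - Pi.single i 1 = c := by
            funext j
            rcases eq_or_ne j i with rfl | hj
            · simp [hc''def, Function.update_self, h1]
            · simp [hc''def, Function.update_of_ne hj, Pi.single_eq_of_ne hj]
          rwa [this]
        · have : x i = (c' i : ℝ) := by
            have : (c' i : ℝ) = (c i : ℝ) + 1 := by exact_mod_cast h1
            linarith
          simpa [hc''def, Function.update_self] using this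
      · refine ⟨(c, i), Or.inl ⟨hcZ, ?_⟩, ?_, fun j => hc j⟩
        · have : c - Pi.single i 1 = c'' := by
            funext j
            rcases eq_or_ne j i with rfl | hj
            · simp [hc''def, Function.update_self, h1]
            · simp [hc''def, Function.update_of_ne hj, Pi.single_eq_of_ne hj]
          rwa [this]
        · have hci : (c' i : ℝ) = (c i : ℝ) - 1 := by
            push_cast [h1]; ring
          have : x i = (c i : ℝ) := by linarith
          exact this

lemma oface_disjoint : Pairwise fun p q : (Fin d → ℤ) × Fin d => Disjoint (oface p) (oface q) := by
  rintro ⟨w, i⟩ ⟨v, j⟩ hpq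
  rw [Set.disjoint_left]
  rintro x ⟨hx1, hx2⟩ ⟨hy1, hy2⟩
  rcases eq_or_ne i j with rfl | hij
  · rcases eq_or_ne w v with rfl | hwv
    · exact hpq rfl
    obtain ⟨k, hk⟩ : ∃ k, w k ≠ v k := Function.ne_iff.1 hwv
    have hki : k ≠ i := by
      rintro rfl
      apply hk
      have : (w k : ℝ) = (v k : ℝ) := by rw [← hx1, ← hy1]
      exact_mod_cast this
    have h1 := hx2 k hki
    have h2 := hy2 k hki
    have e1 : (w k : ℝ) < (v k : ℝ) + 1 := lt_trans h1.1 h2.2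
    have e2 : (v k : ℝ) < (w k : ℝ) + 1 := lt_trans h2.1 h1.2
    have e1' : w k < v k + 1 := by exact_mod_cast e1
    have e2' : v k < w k + 1 := by exact_mod_cast e2
    omega
  · have h1 := hy2 i hij
    rw [hx1] at h1
    have e1 : v i < w i := by exact_mod_cast h1.1
    have e2 : (w i : ℝ) < (v i : ℝ) + 1 := h1.2
    have e2' : w i < v i + 1 := by exact_mod_cast e2
    omega

lemma oface_subset_frontier (Z : Finset (Fin d → ℤ)) {p : (Fin d → ℤ) × Fin d}
    (hp : IsBdry Z p) : oface p ⊆ frontier (⋃ z ∈ Z, cube z) := by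
  obtain ⟨w, i⟩ := p
  rintro x ⟨hx1, hx2⟩
  have hFc : IsClosed (⋃ z ∈ Z, cube z) :=
    isClosed_biUnion_finset fun z _ => isClosed_cube z
  rw [frontier_eq_closure_inter_closure, hFc.closure_eq]
  constructor
  · rcases hp with ⟨hw, _⟩ | ⟨_, hw⟩
    · refine Set.mem_biUnion hw fun j => ?_
      rcases eq_or_ne j i with rfl | hj
      · rw [hx1]; exact ⟨le_refl _, by linarith⟩
      · exact ⟨(hx2 j hj).1.le, (hx2 j hj).2.le⟩
    · refine Set.mem_biUnion hw fun j => ?_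
      rcases eq_or_ne j i with rfl | hj
      · rw [hx1]
        constructor
        · simp [Pi.single_eq_same]
        · simp [Pi.single_eq_same]
      · rw [Pi.sub_apply, Pi.single_eq_of_ne hj]
        push_cast
        exact ⟨by simpa using (hx2 j hj).1.le, by simpa using (hx2 j hj).2.le⟩
  · rw [Metric.mem_closure_iff]
    intro ε hε
    set δ : ℝ := min (ε / 2) (1 / 2) with hδ
    have hδ0 : 0 < δ := lt_min (by linarith) (by norm_num)
    have hδε : δ < ε := lt_of_le_of_lt (min_le_left _ _) (by linarith)
    have hδ1 : δ < 1 := lt_of_le_of_lt (min_le_right _ _) (by norm_num)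
    rcases hp with ⟨_, hw⟩ | ⟨hw, _⟩
    · refine ⟨x + EuclideanSpace.single i (-δ), ?_, ?_⟩
      · intro hyF
        rw [Set.mem_iUnion₂] at hyF
        obtain ⟨z, hzZ, hz⟩ := hyF
        have : z = w - Pi.single i 1 := by
          refine opencell_unique (c := w - Pi.single i 1) ?_ hz
          intro j
          rcases eq_or_ne j i with rfl | hj
          · have : (x + EuclideanSpace.single j (-δ)) j = x j + (-δ) := by
              simp [PiLp.add_apply, EuclideanSpace.single_apply]
            rw [this, hx1, Pi.sub_apply, Pi.single_eq_same]
            push_cast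
            constructor <;> linarith
          · have : (x + EuclideanSpace.single i (-δ)) j = x j := by
              simp [PiLp.add_apply, EuclideanSpace.single_apply, hj]
            rw [this, Pi.sub_apply, Pi.single_eq_of_ne hj]
            push_cast
            exact ⟨by simpa using (hx2 j hj).1, by simpa using (hx2 j hj).2⟩
        exact hw (this ▸ hzZ)
      · have : dist x (x + EuclideanSpace.single i (-δ)) = ‖EuclideanSpace.single i (-δ)‖ := by
          rw [dist_eq_norm]
          simp
        rw [this, EuclideanSpace.norm_single]
        simpa [abs_of_pos hδ0] using hδε
    · refine ⟨x + EuclideanSpace.single i δ, ?_, ?_⟩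
      · intro hyF
        rw [Set.mem_iUnion₂] at hyF
        obtain ⟨z, hzZ, hz⟩ := hyF
        have : z = w := by
          refine opencell_unique (c := w) ?_ hz
          intro j
          rcases eq_or_ne j i with rfl | hj
          · have : (x + EuclideanSpace.single j δ) j = x j + δ := by
              simp [PiLp.add_apply, EuclideanSpace.single_apply]
            rw [this, hx1]
            constructor <;> linarith
          · have : (x + EuclideanSpace.single i δ) j = x j := by
              simp [PiLp.add_apply, EuclideanSpace.single_apply, hj]
            rw [this]
            exact hx2 j hj
        exact hw (this ▸ hzZ)
      · have : dist x (x + EuclideanSpace.single i δ) = ‖EuclideanSpace.single i δ‖ := by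
          rw [dist_eq_norm]
          simp
        rw [this, EuclideanSpace.norm_single]
        simpa [abs_of_pos hδ0] using hδε

/-- Each open boundary face has `n`-dimensional Hausdorff measure at least 1 in `ℝ^{n+1}`. -/
lemma one_le_hausdorff_oface {n : ℕ} (p : (Fin (n + 1) → ℤ) × Fin (n + 1)) :
    1 ≤ μH[(n : ℝ)] (oface p) := by
  classical
  obtain ⟨w, i⟩ := p
  set g : EuclideanSpace ℝ (Fin (n + 1)) → (Fin n → ℝ) := fun x k => x (i.succAbove k) with hg
  have hlip : LipschitzWith 1 g := by
    apply LipschitzWith.of_dist_le_mul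
    intro x y
    simp only [NNReal.coe_one, one_mul]
    refine (dist_pi_le_iff dist_nonneg).2 fun k => ?_
    exact coord_dist_le x y (i.succAbove k)
  set box : Set (Fin n → ℝ) :=
    Set.pi Set.univ fun k => Set.Ioo ((w (i.succAbove k) : ℝ)) ((w (i.succAbove k) : ℝ) + 1)
    with hbox
  have hsub : box ⊆ g '' oface (w, i) := by
    intro u hu
    refine ⟨WithLp.toLp 2 (i.insertNth ((w i : ℝ)) u), ⟨?_, ?_⟩, ?_⟩
    · exact Fin.insertNth_apply_same (α := fun _ => ℝ) i _ u
    · intro j hj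
      obtain ⟨k, rfl⟩ := Fin.exists_succAbove_eq hj
      rw [PiLp.toLp_apply, Fin.insertNth_apply_succAbove]
      exact hu k (Set.mem_univ k)
    · funext k
      exact Fin.insertNth_apply_succAbove (α := fun _ => ℝ) i _ u k
  have hvol : volume box = 1 := by
    rw [hbox, volume_pi_pi]
    simp [Real.volume_Ioo]
  have h1 : (1 : ℝ≥0∞) = μH[(n : ℝ)] box := by
    have := hausdorffMeasure_pi_real (ι := Fin n)
    rw [Fintype.card_fin] at this
    rw [this, hvol]
  rw [h1]
  calc μH[(n : ℝ)] box ≤ μH[(n : ℝ)] (g '' oface (w, i)) := measure_mono hsub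
    _ ≤ (1 : ℝ≥0) ^ (n : ℝ) * μH[(n : ℝ)] (oface (w, i)) :=
        hlip.hausdorffMeasure_image_le (by positivity) _
    _ = μH[(n : ℝ)] (oface (w, i)) := by simp

/-- The box around a face, thickened by `t`. -/
def box (t : ℝ) (p : (Fin d → ℤ) × Fin d) : Set (EuclideanSpace ℝ (Fin d)) :=
  {x | ∀ j, x j ∈ Set.Icc ((p.1 j : ℝ) - t) ((p.1 j : ℝ) + t + if j = p.2 then 0 else 1)}

lemma volume_box (t : ℝ) (p : (Fin d → ℤ) × Fin d) :
    volume (box t p) =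
      ENNReal.ofReal (2 * t) * ENNReal.ofReal (1 + 2 * t) ^ (d - 1) := by
  classical
  have hbox : box t p = (MeasurableEquiv.toLp 2 (Fin d → ℝ)).symm ⁻¹'
      (Set.pi Set.univ fun j =>
        Set.Icc ((p.1 j : ℝ) - t) ((p.1 j : ℝ) + t + if j = p.2 then 0 else 1)) := by
    ext x
    simp only [box, Set.mem_preimage, Set.mem_pi, Set.mem_univ, forall_true_left,
      Set.mem_setOf_eq]
    rfl
  rw [hbox,
    (EuclideanSpace.volume_preserving_symm_measurableEquiv_toLp (Fin d)).measure_preimage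
      ((MeasurableSet.univ_pi fun j => measurableSet_Icc).nullMeasurableSet),
    volume_pi_pi]
  have hlen : ∀ j : Fin d, volume (Set.Icc ((p.1 j : ℝ) - t)
      ((p.1 j : ℝ) + t + if j = p.2 then 0 else 1)) =
      if j = p.2 then ENNReal.ofReal (2 * t) else ENNReal.ofReal (1 + 2 * t) := by
    intro j
    rw [Real.volume_Icc]
    split_ifs with h
    · congr 1; ring
    · congr 1; ring
  simp_rw [hlen]
  rw [← Finset.mul_prod_erase Finset.univ _ (Finset.mem_univ p.2), if_pos rfl]
  congr 1
  rw [Finset.prod_congr rfl fun j hj => if_neg (Finset.mem_erase.1 hj).1,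
    Finset.prod_const, Finset.card_erase_of_mem (Finset.mem_univ p.2), Finset.card_univ,
    Fintype.card_fin]

lemma closedBall_subset_box {t : ℝ} (ht : 0 ≤ t) {p : (Fin d → ℤ) × Fin d}
    {y : EuclideanSpace ℝ (Fin d)} (hy : y ∈ face p) :
    Metric.closedBall y t ⊆ box t p := by
  intro x hx
  rw [Metric.mem_closedBall] at hx
  intro j
  have hj : dist (x j) (y j) ≤ t := le_trans (coord_dist_le x y j) (dist_comm x y ▸ hx)
  have habs : |x j - y j| ≤ t := by rwa [← Real.dist_eq]
  obtain ⟨h1, h2⟩ := abs_le.1 habs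
  have hy1 : (p.1 j : ℝ) ≤ y j := (hy.2 j).1
  have hy2 : y j ≤ (p.1 j : ℝ) + 1 := (hy.2 j).2
  constructor
  · linarith
  · rcases eq_or_ne j p.2 with rfl | hne
    · rw [if_pos rfl]
      have hyy : y p.2 = (p.1 p.2 : ℝ) := hy.1
      linarith
    · rw [if_neg hne]
      linarith

end VTBAux

open VTBAux

/-- For `F` a finite union of closed unit lattice cubes in `ℝ^d` and `t ∈ (0, b₁]`,
`ℒ^d(U(∂F, t)) ≤ 2·(1 + 2b₁)^{d−1}·t·ℋ^{d−1}(∂F)`. -/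
theorem volume_thickened_boundary_lattice_cubes (d : ℕ) (hd : 1 ≤ d)
    (Z : Finset (Fin d → ℤ)) (F : Set (EuclideanSpace ℝ (Fin d)))
    (hF : F = ⋃ z ∈ Z, {x : EuclideanSpace ℝ (Fin d) |
      ∀ i, x i ∈ Set.Icc ((z i : ℝ)) ((z i : ℝ) + 1)})
    (b₁ : ℝ) (hb₁ : 0 < b₁) (t : ℝ) (ht : t ∈ Set.Ioc 0 b₁) :
    volume (cthickening t (frontier F)) ≤
      ENNReal.ofReal (2 * (1 + 2 * b₁) ^ (d - 1) * t) * μH[((d : ℝ) - 1)] (frontier F) := by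
  classical
  obtain ⟨n, rfl⟩ : ∃ n, d = n + 1 := ⟨d - 1, by omega⟩
  obtain ⟨ht0, htb⟩ := ht
  have hFcube : F = ⋃ z ∈ Z, cube z := hF
  set B := bdry Z with hB
  have hFc : IsClosed F := by
    rw [hFcube]; exact isClosed_biUnion_finset fun z _ => isClosed_cube z
  -- frontier is covered by the boundary faces
  have hfr : frontier F ⊆ ⋃ p ∈ B, face p := by
    intro x hx
    rw [hFc.frontier_eq] at hx
    obtain ⟨hxF, hxI⟩ := hx
    obtain ⟨z, hzZ, hz⟩ : ∃ z ∈ Z, x ∈ cube z := by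
      rw [hFcube] at hxF; simpa using hxF
    have hnint : ¬ ∀ c, x ∈ cube c → c ∈ Z := by
      intro hall
      exact hxI (hFcube ▸ mem_interior_of_cells (by omega) Z hall)
    push_neg at hnint
    obtain ⟨c', hc', hc'Z⟩ := hnint
    obtain ⟨p, hp, hxp⟩ := walk Z x _ z c' le_rfl hz hc' hzZ hc'Z
    exact Set.mem_biUnion (mem_bdry.2 hp) hxp
  -- covering the thickened frontier by boxes
  have hUclosed : IsClosed (⋃ p ∈ B, face p) :=
    isClosed_biUnion_finset fun p _ => isClosed_face p
  have hcover : cthickening t (frontier F) ⊆ ⋃ p ∈ B, box t p := by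
    have hmono : cthickening t (frontier F) ⊆ cthickening t (⋃ p ∈ B, face p) := by
      intro x hx
      rw [Metric.mem_cthickening_iff] at hx ⊢
      exact le_trans (EMetric.infEdist_anti hfr) hx
    refine hmono.trans ?_
    rw [hUclosed.cthickening_eq_biUnion_closedBall ht0.le]
    refine Set.iUnion₂_subset fun y hy => ?_
    obtain ⟨p, hp, hyp⟩ : ∃ p ∈ B, y ∈ face p := by simpa using hy
    exact (closedBall_subset_box ht0.le hyp).trans
      (Set.subset_biUnion_of_mem (u := fun p => box t p) hp)
  -- lower bound on the Hausdorff measure of the frontier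
  have hexp : ((n + 1 : ℕ) : ℝ) - 1 = (n : ℝ) := by push_cast; ring
  have hmu : (B.card : ℝ≥0∞) ≤ μH[(((n + 1 : ℕ) : ℝ) - 1)] (frontier F) := by
    rw [hexp]
    calc (B.card : ℝ≥0∞) = ∑ _p ∈ B, (1 : ℝ≥0∞) := by simp
      _ ≤ ∑ p ∈ B, μH[(n : ℝ)] (oface p) :=
          Finset.sum_le_sum fun p _ => one_le_hausdorff_oface p
      _ = μH[(n : ℝ)] (⋃ p ∈ B, oface p) :=
          (measure_biUnion_finset (fun p _ q _ hpq => oface_disjoint hpq)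
            (fun p _ => measurableSet_oface p)).symm
      _ ≤ μH[(n : ℝ)] (frontier F) := by
          refine measure_mono (Set.iUnion₂_subset fun p hp => ?_)
          rw [hFcube]
          exact oface_subset_frontier Z (mem_bdry.1 hp)
  -- conclude
  calc volume (cthickening t (frontier F))
      ≤ volume (⋃ p ∈ B, box t p) := measure_mono hcover
    _ ≤ ∑ p ∈ B, volume (box t p) := measure_biUnion_finset_le B _
    _ = B.card • (ENNReal.ofReal (2 * t) * ENNReal.ofReal (1 + 2 * t) ^ (n + 1 - 1)) := by
        rw [Finset.sum_congr rfl fun p _ => volume_box t p, Finset.sum_const]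
    _ ≤ B.card * ENNReal.ofReal (2 * (1 + 2 * b₁) ^ (n + 1 - 1) * t) := by
        rw [nsmul_eq_mul]
        refine mul_le_mul_right ?_ _
        rw [← ENNReal.ofReal_pow (by linarith), ← ENNReal.ofReal_mul (by linarith)]
        refine ENNReal.ofReal_le_ofReal ?_
        simp only [Nat.add_sub_cancel]
        calc 2 * t * (1 + 2 * t) ^ n ≤ 2 * t * (1 + 2 * b₁) ^ n := by
              have h1 : (0 : ℝ) ≤ 2 * t := by linarith
              have h2 : (0 : ℝ) ≤ 1 + 2 * t := by linarith
              have h3 : (1 : ℝ) + 2 * t ≤ 1 + 2 * b₁ := by linarith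
              exact mul_le_mul_of_nonneg_left (pow_le_pow_left₀ h2 h3 n) h1
          _ = 2 * (1 + 2 * b₁) ^ n * t := by ring
    _ = ENNReal.ofReal (2 * (1 + 2 * b₁) ^ (n + 1 - 1) * t) * B.card := mul_comm _ _
    _ ≤ ENNReal.ofReal (2 * (1 + 2 * b₁) ^ (n + 1 - 1) * t) *
          μH[(((n + 1 : ℕ) : ℝ) - 1)] (frontier F) := mul_le_mul_right hmu _
end
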